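/- Let G=(V,E,w) be a connected weighted undirected graph with n vertices, Laplacian L, and minimum edge weight w_min. Then for an arbitrary nonempty proper subset S ⊆ V of vertices and an arbitrary vector v ∈ R^{n−|S|}, each coordinate satisfies v_i² ≤ (n / w_min) · v^T L_{−S} v. -/

import Mathlib

open Matrix BigOperators Finset

section Aux

variable {n : ℕ}

/-- auxiliary graph with adjacency `A a b ≠ 0` -/
def auxGraph (A : Matrix (Fin n) (Fin n) ℝ) (hsym : A.IsSymm) (hloop : ∀ i, A i i = 0) :
    SimpleGraph (Fin n) where
  Adj a b := A a b ≠ 0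
  symm := ⟨fun a b h => by show A b a ≠ 0; rw [hsym.apply a b]; exact h⟩
  loopless := ⟨fun a h => h (hloop a)⟩

lemma auxGraph_reach (A : Matrix (Fin n) (Fin n) ℝ) (hsym : A.IsSymm)
    (hloop : ∀ i, A i i = 0) :
    ∀ (k : ℕ) (a b : Fin n), (A ^ k) a b ≠ 0 → (auxGraph A hsym hloop).Reachable a b := by
  intro k
  induction k with
  | zero =>
    intro a b h
    rw [pow_zero, Matrix.one_apply] at h
    by_cases hab : a = b
    · exact hab ▸ SimpleGraph.Reachable.refl a
    · simp [hab] at h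
  | succ k ih =>
    intro a b h
    rw [pow_succ, Matrix.mul_apply] at h
    obtain ⟨m, -, hm⟩ := Finset.exists_ne_zero_of_sum_ne_zero h
    have h1 : (A ^ k) a m ≠ 0 := left_ne_zero_of_mul hm
    have h2 : A m b ≠ 0 := right_ne_zero_of_mul hm
    exact (ih a m h1).trans (SimpleGraph.Adj.reachable h2)

lemma tele_walk (A : Matrix (Fin n) (Fin n) ℝ) (hsym : A.IsSymm)
    (hloop : ∀ i, A i i = 0) (x : Fin n → ℝ) :
    ∀ {a b : Fin n} (q : (auxGraph A hsym hloop).Walk a b),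
      (q.darts.map (fun d => x d.fst - x d.snd)).sum = x a - x b := by
  intro a b q
  induction q with
  | nil => simp
  | cons h q ih =>
    rw [SimpleGraph.Walk.darts_cons, List.map_cons, List.sum_cons, ih]
    ring

end Aux

/-- For a connected weighted undirected graph with `n` vertices, Laplacian `L`, and
minimum edge weight `w_min`, for an arbitrary nonempty proper subset `S ⊆ V` of vertices and an
arbitrary vector `v ∈ ℝ^{n−|S|}`, each coordinate satisfies
`v_i² ≤ (n / w_min) · vᵀ L_{−S} v`. -/
theorem reduced_laplacian_coordinate_bound
    (n : ℕ) (hn : 0 < n)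
    (A : Matrix (Fin n) (Fin n) ℝ)
    (hsym : A.IsSymm)
    (hnonneg : ∀ i j, 0 ≤ A i j)
    (hloop : ∀ i, A i i = 0)
    (hconn : ∀ i j : Fin n, ∃ k : ℕ, (A ^ k) i j ≠ 0)
    (deg : Fin n → ℝ) (hdeg : ∀ i, deg i = ∑ j, A i j)
    (L : Matrix (Fin n) (Fin n) ℝ) (hL : L = Matrix.diagonal deg - A)
    (wmin : ℝ)
    (hwminle : ∀ i j, A i j ≠ 0 → wmin ≤ A i j)
    (hwminmem : ∃ i j, A i j ≠ 0 ∧ A i j = wmin)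
    (S : Finset (Fin n)) (hS : S.Nonempty) (hSproper : S ≠ Finset.univ)
    (v : {i : Fin n // i ∉ S} → ℝ) (i : {i : Fin n // i ∉ S}) :
    (v i) ^ 2 ≤ ((n : ℝ) / wmin) *
      (∑ a : {i : Fin n // i ∉ S}, ∑ b : {i : Fin n // i ∉ S},
        v a * ((L.submatrix (fun x : {i : Fin n // i ∉ S} => (x : Fin n))
            (fun x : {i : Fin n // i ∉ S} => (x : Fin n))) a b) * v b) := by
  classical
  subst hL
  -- positivity of wmin
  obtain ⟨i0, j0, hij0, hw0⟩ := hwminmem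
  have hwpos : 0 < wmin := hw0 ▸ lt_of_le_of_ne (hnonneg i0 j0) (Ne.symm hij0)
  -- extension of v by zero
  set x : Fin n → ℝ := fun a => if h : a ∈ S then 0 else v ⟨a, h⟩ with hxdef
  have hxS : ∀ a ∈ S, x a = 0 := fun a ha => dif_pos ha
  have hxv : ∀ (a : {i : Fin n // i ∉ S}), x a.val = v a := by
    intro a
    simp only [hxdef, dif_neg a.prop]
  -- the quadratic form over the full index set
  set Q : ℝ := ∑ a : Fin n, ∑ b : Fin n,
      x a * ((Matrix.diagonal deg - A) a b) * x b with hQdef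
  -- target sum equals Q
  have key : ∀ f : Fin n → ℝ, (∀ a ∈ S, f a = 0) →
      ∑ a : {i : Fin n // i ∉ S}, f a.val = ∑ a : Fin n, f a := by
    intro f hf
    rw [← Finset.sum_subtype Sᶜ (fun a => Finset.mem_compl) f]
    exact Finset.sum_subset (Finset.subset_univ _)
      (fun a _ ha => hf a (Finset.notMem_compl.mp ha))
  have hQsub : (∑ a : {i : Fin n // i ∉ S}, ∑ b : {i : Fin n // i ∉ S},
      v a * (((Matrix.diagonal deg - A).submatrix
          (fun x : {i : Fin n // i ∉ S} => (x : Fin n))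
          (fun x : {i : Fin n // i ∉ S} => (x : Fin n))) a b) * v b) = Q := by
    rw [hQdef]
    have step1 : ∀ a : {i : Fin n // i ∉ S},
        (∑ b : {i : Fin n // i ∉ S},
          v a * (((Matrix.diagonal deg - A).submatrix
            (fun x : {i : Fin n // i ∉ S} => (x : Fin n))
            (fun x : {i : Fin n // i ∉ S} => (x : Fin n))) a b) * v b)
        = ∑ b : Fin n, x a.val * ((Matrix.diagonal deg - A) a.val b) * x b := by
      intro a
      rw [← key (fun b => x a.val * ((Matrix.diagonal deg - A) a.val b) * x b)
        (fun b hb => by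
          show x a.val * ((Matrix.diagonal deg - A) a.val b) * x b = 0
          rw [hxS b hb, mul_zero])]
      apply Finset.sum_congr rfl
      intro b _
      rw [hxv a, hxv b, Matrix.submatrix_apply]
    rw [Finset.sum_congr rfl (fun a _ => step1 a)]
    exact key (fun a => ∑ b : Fin n, x a * ((Matrix.diagonal deg - A) a b) * x b)
      (fun a ha => by
        apply Finset.sum_eq_zero
        intro b _
        show x a * ((Matrix.diagonal deg - A) a b) * x b = 0
        rw [hxS a ha, zero_mul, zero_mul])
  -- Q equals half the weighted sum of squared differences
  have hQ2 : ∑ a : Fin n, ∑ b : Fin n, A a b * (x a - x b) ^ 2 = 2 * Q := by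
    have hrow : ∀ a : Fin n,
        ∑ b : Fin n, x a * ((Matrix.diagonal deg - A) a b) * x b
          = deg a * x a ^ 2 - ∑ b : Fin n, A a b * x a * x b := by
      intro a
      have : ∀ b : Fin n, x a * ((Matrix.diagonal deg - A) a b) * x b
          = (if a = b then deg a * x a * x b else 0) - A a b * x a * x b := by
        intro b
        rw [Matrix.sub_apply, Matrix.diagonal_apply]
        split <;> ring
      rw [Finset.sum_congr rfl (fun b _ => this b), Finset.sum_sub_distrib,
        Finset.sum_ite_eq Finset.univ a (fun b => deg a * x a * x b)]
      simp only [Finset.mem_univ, if_true]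
      ring
    have hQ' : Q = ∑ a : Fin n, deg a * x a ^ 2
        - ∑ a : Fin n, ∑ b : Fin n, A a b * x a * x b := by
      rw [hQdef, Finset.sum_congr rfl (fun a _ => hrow a), Finset.sum_sub_distrib]
    have hxa2 : ∑ a : Fin n, ∑ b : Fin n, A a b * x a ^ 2
        = ∑ a : Fin n, deg a * x a ^ 2 := by
      apply Finset.sum_congr rfl
      intro a _
      rw [hdeg a, Finset.sum_mul]
    have hxb2 : ∑ a : Fin n, ∑ b : Fin n, A a b * x b ^ 2
        = ∑ a : Fin n, deg a * x a ^ 2 := by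
      rw [Finset.sum_comm]
      rw [← hxa2]
      apply Finset.sum_congr rfl; intro a _
      apply Finset.sum_congr rfl; intro b _
      rw [hsym.apply a b]
    have expand : ∑ a : Fin n, ∑ b : Fin n, A a b * (x a - x b) ^ 2
        = (∑ a : Fin n, ∑ b : Fin n, A a b * x a ^ 2)
          + (∑ a : Fin n, ∑ b : Fin n, A a b * x b ^ 2)
          - 2 * ∑ a : Fin n, ∑ b : Fin n, A a b * x a * x b := by
      rw [Finset.mul_sum, ← Finset.sum_add_distrib, ← Finset.sum_sub_distrib]
      apply Finset.sum_congr rfl; intro a _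
      rw [Finset.mul_sum, ← Finset.sum_add_distrib, ← Finset.sum_sub_distrib]
      apply Finset.sum_congr rfl; intro b _
      ring
    rw [expand, hxa2, hxb2, hQ']
    ring
  have hQnonneg : 0 ≤ Q := by
    have : 0 ≤ ∑ a : Fin n, ∑ b : Fin n, A a b * (x a - x b) ^ 2 :=
      Finset.sum_nonneg fun a _ => Finset.sum_nonneg fun b _ =>
        mul_nonneg (hnonneg a b) (sq_nonneg _)
    linarith [hQ2 ▸ this]
  -- graph setup
  set G := auxGraph A hsym hloop with hGdef
  obtain ⟨s, hsS⟩ := hS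
  obtain ⟨k, hk⟩ := hconn i.val s
  obtain ⟨w0⟩ := auxGraph_reach A hsym hloop k i.val s hk
  set p : G.Path i.val s := w0.toPath with hpdef
  set w : G.Walk i.val s := p.val with hwdef
  have hp : w.IsPath := p.prop
  have hnd : w.support.Nodup := hp.support_nodup
  have hdnd : w.darts.Nodup := SimpleGraph.Walk.darts_nodup_of_support_nodup hnd
  set D : Finset G.Dart := w.darts.toFinset with hDdef
  have hcard : D.card = w.length := by
    rw [hDdef, List.toFinset_card_of_nodup hdnd, SimpleGraph.Walk.length_darts]
  have hlen : w.length < n := by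
    have := hp.length_lt
    simpa using this
  -- telescoping
  have hsum1 : ∑ d ∈ D, (x d.fst - x d.snd) = x i.val - x s := by
    rw [hDdef, List.sum_toFinset _ hdnd]
    exact tele_walk A hsym hloop x w
  -- Cauchy-Schwarz
  have hCS : (x i.val - x s) ^ 2 ≤ (D.card : ℝ) * ∑ d ∈ D, (x d.fst - x d.snd) ^ 2 := by
    rw [← hsum1]
    exact sq_sum_le_card_mul_sum_sq
  -- weight lower bound on darts
  have hWB : wmin * ∑ d ∈ D, (x d.fst - x d.snd) ^ 2
      ≤ ∑ d ∈ D, A d.fst d.snd * (x d.fst - x d.snd) ^ 2 := by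
    rw [Finset.mul_sum]
    apply Finset.sum_le_sum
    intro d _
    exact mul_le_mul_of_nonneg_right (hwminle _ _ d.adj) (sq_nonneg _)
  -- dart sum bounded by Q
  set f : Fin n × Fin n → ℝ := fun q => A q.1 q.2 * (x q.1 - x q.2) ^ 2 with hfdef
  have hfnonneg : ∀ q, 0 ≤ f q := fun q => mul_nonneg (hnonneg _ _) (sq_nonneg _)
  set F : Finset (Fin n × Fin n) := D.image (fun d => d.toProd) with hFdef
  set F' : Finset (Fin n × Fin n) := F.image Prod.swap with hF'def
  have hFsum : ∑ q ∈ F, f q = ∑ d ∈ D, A d.fst d.snd * (x d.fst - x d.snd) ^ 2 := by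
    rw [hFdef]
    exact Finset.sum_image (fun a _ b _ h => SimpleGraph.Dart.toProd_injective h)
  have hF'sum : ∑ q ∈ F', f q = ∑ q ∈ F, f q := by
    rw [hF'def, Finset.sum_image (fun a _ b _ h => Prod.swap_injective h)]
    apply Finset.sum_congr rfl
    intro q _
    simp only [hfdef, Prod.fst_swap, Prod.snd_swap]
    rw [hsym.apply q.1 q.2]
    ring
  have hdisj : Disjoint F F' := by
    rw [Finset.disjoint_left]
    intro q hq hq'
    rw [hF'def, Finset.mem_image] at hq'
    obtain ⟨r, hr, hrq⟩ := hq'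
    rw [hFdef, Finset.mem_image] at hq hr
    obtain ⟨d1, hd1, hd1q⟩ := hq
    obtain ⟨d2, hd2, hd2r⟩ := hr
    rw [hDdef, List.mem_toFinset] at hd1 hd2
    have hedge : d1.edge = d2.edge := by
      rw [SimpleGraph.Dart.edge, SimpleGraph.Dart.edge, hd1q, hd2r, ← hrq]
      exact Sym2.mk_prod_swap_eq
    have hd12 : d1 = d2 := by
      have hedges : (w.darts.map SimpleGraph.Dart.edge).Nodup := hp.isTrail.edges_nodup
      exact List.inj_on_of_nodup_map hedges hd1 hd2 hedge
    have hne : q.1 ≠ q.2 := by rw [← hd1q]; exact d1.adj.ne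
    apply hne
    have h1 : r = q := by rw [← hd2r, ← hd12, hd1q]
    have h2 : q.swap = q := by conv_lhs => rw [← hrq, Prod.swap_swap, h1]
    conv_lhs => rw [← h2]
    exact Prod.fst_swap
  have hFQ : 2 * ∑ q ∈ F, f q ≤ 2 * Q := by
    have hsub : F ∪ F' ⊆ Finset.univ := Finset.subset_univ _
    have h1 : ∑ q ∈ F ∪ F', f q ≤ ∑ q : Fin n × Fin n, f q :=
      Finset.sum_le_sum_of_subset_of_nonneg hsub (fun q _ _ => hfnonneg q)
    rw [Finset.sum_union hdisj, hF'sum] at h1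
    have h2 : ∑ q : Fin n × Fin n, f q
        = ∑ a : Fin n, ∑ b : Fin n, A a b * (x a - x b) ^ 2 := by
      simp only [hfdef]
      exact Fintype.sum_prod_type (f := fun q : Fin n × Fin n => A q.1 q.2 * (x q.1 - x q.2) ^ 2)
    rw [h2, hQ2] at h1
    linarith
  have hDQ : ∑ d ∈ D, A d.fst d.snd * (x d.fst - x d.snd) ^ 2 ≤ Q := by
    rw [← hFsum]; linarith
  -- combine
  have hvx : v i ^ 2 = (x i.val - x s) ^ 2 := by
    rw [hxS s hsS, sub_zero, hxv i]
  have hDcast : (D.card : ℝ) ≤ (n : ℝ) := by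
    have : D.card ≤ n := by omega
    exact_mod_cast this
  have hsumnn : 0 ≤ ∑ d ∈ D, (x d.fst - x d.snd) ^ 2 :=
    Finset.sum_nonneg fun d _ => sq_nonneg _
  have hmain : wmin * v i ^ 2 ≤ (n : ℝ) * Q := by
    rw [hvx]
    calc wmin * (x i.val - x s) ^ 2
        ≤ wmin * ((D.card : ℝ) * ∑ d ∈ D, (x d.fst - x d.snd) ^ 2) :=
          mul_le_mul_of_nonneg_left hCS hwpos.le
      _ = (D.card : ℝ) * (wmin * ∑ d ∈ D, (x d.fst - x d.snd) ^ 2) := by ring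
      _ ≤ (D.card : ℝ) * (∑ d ∈ D, A d.fst d.snd * (x d.fst - x d.snd) ^ 2) :=
          mul_le_mul_of_nonneg_left hWB (Nat.cast_nonneg _)
      _ ≤ (n : ℝ) * Q := by
          apply mul_le_mul hDcast hDQ _ (Nat.cast_nonneg n)
          exact Finset.sum_nonneg fun d _ =>
            mul_nonneg (hnonneg _ _) (sq_nonneg _)
  rw [hQsub, div_mul_eq_mul_div, le_div_iff₀ hwpos]
  linarith
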